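/- arXiv:1612.08717 — 2 statements merged into one kernel-verified Lean document; each statement's English description precedes it below -/
import Mathlib

section
/- Let Ω ⊂ ℝⁿ be a bounded open set, let A ⊆ Ω be measurable, and set K_A := {w ∈ 𝒟_s(Ω) : w ≤ 0 a.e. on ℝⁿ∖A}. Suppose w₀ ∈ K_A satisfies the variational inequality 𝓔_s(w₀, v − w₀) ≥ ∫_{ℝⁿ} (v − w₀) dx for every v ∈ K_A. Then w₀ ≥ 0 a.e. in ℝⁿ (hence w₀ = 0 a.e. on ℝⁿ∖A, i.e. w₀ ∈ 𝒟_s(A)), and w₀ is a weak solution of (−Δ)^s u = 1 in A. -/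
open MeasureTheory ENNReal Filter Topology

noncomputable section

/-- Euclidean space ℝⁿ. -/
abbrev Rn (n : ℕ) := EuclideanSpace ℝ (Fin n)

/-- The first coordinate of a point of ℝⁿ (junk value `0` when `n = 0`). -/
def firstCoord {n : ℕ} (ζ : Rn n) : ℝ := if h : 0 < n then ζ ⟨0, h⟩ else 0

/-- The normalization constant `c(n,s)`. -/
def cns (n : ℕ) (s : ℝ) : ℝ :=
  (∫ ζ : Rn n, (1 - Real.cos (firstCoord ζ)) / ‖ζ‖ ^ ((n : ℝ) + 2 * s))⁻¹

/-- The square of the Gagliardo seminorm `[u]_s²`, as an extended nonnegative real. -/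
def gagSq (n : ℕ) (s : ℝ) (u : Rn n → ℝ) : ℝ≥0∞ :=
  ∫⁻ p : Rn n × Rn n,
    ENNReal.ofReal ((u p.1 - u p.2) ^ 2 / ‖p.1 - p.2‖ ^ ((n : ℝ) + 2 * s))

/-- The bilinear energy `𝓔_s(u,v)`. -/
def energy (n : ℕ) (s : ℝ) (u v : Rn n → ℝ) : ℝ :=
  (cns n s / 2) *
    ∫ p : Rn n × Rn n,
      (u p.1 - u p.2) * (v p.1 - v p.2) / ‖p.1 - p.2‖ ^ ((n : ℝ) + 2 * s)

/-- The class `𝒟_s(D)`: `L²` functions with finite Gagliardo seminorm vanishing a.e. outside `D`. -/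
def Ds (n : ℕ) (s : ℝ) (D : Set (Rn n)) (w : Rn n → ℝ) : Prop :=
  MemLp w 2 (volume : Measure (Rn n)) ∧ gagSq n s w < ⊤ ∧
    ∀ᵐ x : Rn n, x ∉ D → w x = 0

lemma myDiv_le {a b d : ℝ} (h : a ≤ b) (hd : 0 ≤ d) : a / d ≤ b / d := by
  rcases hd.eq_or_lt with h0 | h0
  · simp [← h0]
  · gcongr

lemma cns_nonneg (n : ℕ) (s : ℝ) : 0 ≤ cns n s := by
  apply inv_nonneg.mpr
  apply integral_nonneg
  intro ζ
  exact div_nonneg (by linarith [Real.cos_le_one (firstCoord ζ)])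
    (Real.rpow_nonneg (norm_nonneg _) _)

lemma aemeas_integrand (n : ℕ) (q : ℝ) {u : Rn n → ℝ}
    (hu : AEStronglyMeasurable u (volume : Measure (Rn n))) :
    AEMeasurable (fun p : Rn n × Rn n =>
      ENNReal.ofReal ((u p.1 - u p.2) ^ 2 / ‖p.1 - p.2‖ ^ q)) volume := by
  rw [Measure.volume_eq_prod]
  have h1 : AEMeasurable (fun p : Rn n × Rn n => u p.1)
      ((volume : Measure (Rn n)).prod volume) := hu.comp_fst.aemeasurable
  have h2 : AEMeasurable (fun p : Rn n × Rn n => u p.2)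
      ((volume : Measure (Rn n)).prod volume) := hu.comp_snd.aemeasurable
  have h3 : AEMeasurable (fun p : Rn n × Rn n => (u p.1 - u p.2) ^ 2)
      ((volume : Measure (Rn n)).prod volume) := (h1.sub h2).pow_const 2
  have h4 : Measurable (fun p : Rn n × Rn n => ‖p.1 - p.2‖ ^ q) :=
    (measurable_fst.sub measurable_snd).norm.pow measurable_const
  exact ENNReal.measurable_ofReal.comp_aemeasurable (h3.div h4.aemeasurable)

lemma gag_add_lt_top (n : ℕ) (s : ℝ) {u v : Rn n → ℝ}
    (hu : AEStronglyMeasurable u (volume : Measure (Rn n)))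
    (hv : AEStronglyMeasurable v (volume : Measure (Rn n)))
    (hgu : gagSq n s u < ⊤) (hgv : gagSq n s v < ⊤) :
    gagSq n s (fun x => u x + v x) < ⊤ := by
  set q := (n : ℝ) + 2 * s with hq
  have hF := aemeas_integrand n q hu
  have hG := aemeas_integrand n q hv
  have key : ∀ p : Rn n × Rn n,
      ENNReal.ofReal (((u p.1 + v p.1) - (u p.2 + v p.2)) ^ 2 / ‖p.1 - p.2‖ ^ q) ≤
        2 * ENNReal.ofReal ((u p.1 - u p.2) ^ 2 / ‖p.1 - p.2‖ ^ q) +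
        2 * ENNReal.ofReal ((v p.1 - v p.2) ^ 2 / ‖p.1 - p.2‖ ^ q) := by
    intro p
    have hd0 : (0:ℝ) ≤ ‖p.1 - p.2‖ ^ q := Real.rpow_nonneg (norm_nonneg _) _
    have h1 : ((u p.1 + v p.1) - (u p.2 + v p.2)) ^ 2 ≤
        2 * (u p.1 - u p.2) ^ 2 + 2 * (v p.1 - v p.2) ^ 2 := by
      nlinarith [sq_nonneg ((u p.1 - u p.2) - (v p.1 - v p.2))]
    calc ENNReal.ofReal (((u p.1 + v p.1) - (u p.2 + v p.2)) ^ 2 / ‖p.1 - p.2‖ ^ q)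
        ≤ ENNReal.ofReal ((2 * (u p.1 - u p.2) ^ 2 + 2 * (v p.1 - v p.2) ^ 2)
            / ‖p.1 - p.2‖ ^ q) := ENNReal.ofReal_le_ofReal (myDiv_le h1 hd0)
      _ = ENNReal.ofReal (2 * ((u p.1 - u p.2) ^ 2 / ‖p.1 - p.2‖ ^ q)
            + 2 * ((v p.1 - v p.2) ^ 2 / ‖p.1 - p.2‖ ^ q)) := by
          rw [add_div, mul_div_assoc, mul_div_assoc]
      _ = 2 * ENNReal.ofReal ((u p.1 - u p.2) ^ 2 / ‖p.1 - p.2‖ ^ q) +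
            2 * ENNReal.ofReal ((v p.1 - v p.2) ^ 2 / ‖p.1 - p.2‖ ^ q) := by
          rw [ENNReal.ofReal_add (by positivity) (by positivity),
            ENNReal.ofReal_mul (by norm_num), ENNReal.ofReal_mul (by norm_num),
            ENNReal.ofReal_ofNat]
  unfold gagSq at hgu hgv ⊢
  rw [← hq] at hgu hgv ⊢
  calc (∫⁻ p : Rn n × Rn n,
        ENNReal.ofReal (((fun x => u x + v x) p.1 - (fun x => u x + v x) p.2) ^ 2
          / ‖p.1 - p.2‖ ^ q))
      ≤ ∫⁻ p : Rn n × Rn n,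
          (2 * ENNReal.ofReal ((u p.1 - u p.2) ^ 2 / ‖p.1 - p.2‖ ^ q) +
           2 * ENNReal.ofReal ((v p.1 - v p.2) ^ 2 / ‖p.1 - p.2‖ ^ q)) :=
        lintegral_mono fun p => key p
    _ = 2 * (∫⁻ p : Rn n × Rn n, ENNReal.ofReal ((u p.1 - u p.2) ^ 2 / ‖p.1 - p.2‖ ^ q)) +
        2 * (∫⁻ p : Rn n × Rn n, ENNReal.ofReal ((v p.1 - v p.2) ^ 2 / ‖p.1 - p.2‖ ^ q)) := by
        rw [lintegral_add_left' (hF.const_mul 2),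
          lintegral_const_mul'' 2 hF, lintegral_const_mul'' 2 hG]
    _ < ⊤ := by
        apply ENNReal.add_lt_top.2
        constructor
        · exact ENNReal.mul_lt_top (by norm_num) hgu
        · exact ENNReal.mul_lt_top (by norm_num) hgv

lemma gag_neg (n : ℕ) (s : ℝ) (v : Rn n → ℝ) :
    gagSq n s (fun x => -v x) = gagSq n s v := by
  unfold gagSq
  congr 1
  funext p
  congr 2
  ring

theorem stmt0 (n : ℕ) (hn : 1 ≤ n) (s : ℝ) (hs : s ∈ Set.Ioo (0:ℝ) 1)
    (Ω : Set (Rn n)) (hΩo : IsOpen Ω) (hΩb : Bornology.IsBounded Ω)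
    (A : Set (Rn n)) (hAΩ : A ⊆ Ω) (hA : MeasurableSet A)
    (KA : Set (Rn n → ℝ))
    (hKA : KA = {w | Ds n s Ω w ∧ ∀ᵐ x : Rn n, x ∉ A → w x ≤ 0})
    (w₀ : Rn n → ℝ) (hw₀ : w₀ ∈ KA)
    (hVI : ∀ v ∈ KA, energy n s w₀ (fun x => v x - w₀ x) ≥ ∫ x : Rn n, (v x - w₀ x)) :
    (∀ᵐ x : Rn n, 0 ≤ w₀ x) ∧ Ds n s A w₀ ∧
      ∀ φ : Rn n → ℝ, Ds n s A φ → energy n s w₀ φ = ∫ x : Rn n, φ x := by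
  rw [hKA] at hw₀
  obtain ⟨⟨hL2, hGag, hΩ0⟩, hAneg⟩ := hw₀
  have hcns : (0:ℝ) ≤ cns n s / 2 := div_nonneg (cns_nonneg n s) (by norm_num)
  -- Integrability of w₀
  have hmeasΩ : MeasurableSet Ω := hΩo.measurableSet
  haveI : IsFiniteMeasure ((volume : Measure (Rn n)).restrict Ω) :=
    ⟨by rw [Measure.restrict_apply_univ]; exact hΩb.measure_lt_top⟩
  have hIntΩ : IntegrableOn w₀ Ω volume := by
    have h1 : MemLp w₀ 1 ((volume : Measure (Rn n)).restrict Ω) :=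
      (hL2.restrict Ω).mono_exponent (by norm_num)
    exact memLp_one_iff_integrable.mp h1
  have hInt : Integrable w₀ (volume : Measure (Rn n)) := by
    have heq : w₀ =ᵐ[volume] Ω.indicator w₀ := by
      filter_upwards [hΩ0] with x hx
      by_cases h : x ∈ Ω
      · simp [Set.indicator_of_mem h]
      · simp [Set.indicator_of_notMem h, hx h]
    exact ((integrable_indicator_iff hmeasΩ).mpr hIntΩ).congr heq.symm
  -- Step 1: test with v = max w₀ 0
  have hv : (fun x => max (w₀ x) 0) ∈ KA := by
    rw [hKA]
    refine ⟨⟨hL2.pos_part, ?_, ?_⟩, ?_⟩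
    · refine lt_of_le_of_lt ?_ hGag
      unfold gagSq
      apply lintegral_mono
      intro p
      apply ENNReal.ofReal_le_ofReal
      apply myDiv_le ?_ (Real.rpow_nonneg (norm_nonneg _) _)
      calc (max (w₀ p.1) 0 - max (w₀ p.2) 0) ^ 2
          = |max (w₀ p.1) 0 - max (w₀ p.2) 0| ^ 2 := (sq_abs _).symm
        _ ≤ |w₀ p.1 - w₀ p.2| ^ 2 :=
            pow_le_pow_left₀ (abs_nonneg _) (abs_max_sub_max_le_abs _ _ _) 2
        _ = (w₀ p.1 - w₀ p.2) ^ 2 := sq_abs _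
    · filter_upwards [hΩ0] with x hx h
      simp [hx h]
    · filter_upwards [hAneg] with x hx h
      exact max_le (hx h) le_rfl
  have hVIv := hVI _ hv
  -- g = (w₀)⁻ : nonnegative
  have hg0 : ∀ x, 0 ≤ max (w₀ x) 0 - w₀ x := fun x => sub_nonneg.mpr (le_max_left _ _)
  -- energy ≤ 0
  have hE : energy n s w₀ (fun x => max (w₀ x) 0 - w₀ x) ≤ 0 := by
    unfold energy
    apply mul_nonpos_of_nonneg_of_nonpos hcns
    apply integral_nonpos
    intro p
    apply div_nonpos_of_nonpos_of_nonneg ?_ (Real.rpow_nonneg (norm_nonneg _) _)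
    have habs := abs_max_sub_max_le_abs (w₀ p.1) (w₀ p.2) 0
    have h1 : (w₀ p.1 - w₀ p.2) * (max (w₀ p.1) 0 - max (w₀ p.2) 0) ≤
        |w₀ p.1 - w₀ p.2| * |max (w₀ p.1) 0 - max (w₀ p.2) 0| := by
      calc (w₀ p.1 - w₀ p.2) * (max (w₀ p.1) 0 - max (w₀ p.2) 0)
          ≤ |(w₀ p.1 - w₀ p.2) * (max (w₀ p.1) 0 - max (w₀ p.2) 0)| := le_abs_self _
        _ = |w₀ p.1 - w₀ p.2| * |max (w₀ p.1) 0 - max (w₀ p.2) 0| := abs_mul _ _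
    have h2 : |w₀ p.1 - w₀ p.2| * |max (w₀ p.1) 0 - max (w₀ p.2) 0| ≤
        |w₀ p.1 - w₀ p.2| * |w₀ p.1 - w₀ p.2| :=
      mul_le_mul_of_nonneg_left habs (abs_nonneg _)
    have h3 : |w₀ p.1 - w₀ p.2| * |w₀ p.1 - w₀ p.2| = (w₀ p.1 - w₀ p.2) * (w₀ p.1 - w₀ p.2) :=
      abs_mul_abs_self _
    show (w₀ p.1 - w₀ p.2) * ((max (w₀ p.1) 0 - w₀ p.1) - (max (w₀ p.2) 0 - w₀ p.2)) ≤ 0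
    nlinarith
  have hIg : ∫ x : Rn n, (max (w₀ x) 0 - w₀ x) ≤ 0 := le_trans hVIv hE
  -- g integrable
  have hgm : AEStronglyMeasurable (fun x => max (w₀ x) 0 - w₀ x) (volume : Measure (Rn n)) :=
    ((hL2.1.aemeasurable.max aemeasurable_const).sub hL2.1.aemeasurable).aestronglyMeasurable
  have hgint : Integrable (fun x => max (w₀ x) 0 - w₀ x) (volume : Measure (Rn n)) := by
    apply hInt.mono hgm
    filter_upwards with x
    rw [Real.norm_eq_abs, Real.norm_eq_abs, abs_of_nonneg (hg0 x)]
    rcases le_total (w₀ x) 0 with h | h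
    · rw [max_eq_right h]
      rw [abs_of_nonpos h]
      linarith
    · rw [max_eq_left h]
      simp [abs_of_nonneg h, h]
  have hIg0 : ∫ x : Rn n, (max (w₀ x) 0 - w₀ x) = 0 :=
    le_antisymm hIg (integral_nonneg hg0)
  have hgz : (fun x => max (w₀ x) 0 - w₀ x) =ᵐ[volume] 0 :=
    (integral_eq_zero_iff_of_nonneg hg0 hgint).mp hIg0
  have part1 : ∀ᵐ x : Rn n, 0 ≤ w₀ x := by
    filter_upwards [hgz] with x hx
    have h := le_max_right (w₀ x) 0
    have hx' : max (w₀ x) 0 - w₀ x = 0 := hx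
    linarith
  -- part 2
  have hA0 : ∀ᵐ x : Rn n, x ∉ A → w₀ x = 0 := by
    filter_upwards [hAneg, part1] with x h1 h2 hx
    exact le_antisymm (h1 hx) h2
  have part2 : Ds n s A w₀ := ⟨hL2, hGag, hA0⟩
  refine ⟨part1, part2, ?_⟩
  -- part 3
  intro φ hφ
  obtain ⟨hφ2, hφg, hφ0⟩ := hφ
  have hφΩ : ∀ᵐ x : Rn n, x ∉ Ω → φ x = 0 := by
    filter_upwards [hφ0] with x h hx
    exact h fun hA' => hx (hAΩ hA')
  have hvp : (fun x => w₀ x + φ x) ∈ KA := by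
    rw [hKA]
    refine ⟨⟨hL2.add hφ2, gag_add_lt_top n s hL2.1 hφ2.1 hGag hφg, ?_⟩, ?_⟩
    · filter_upwards [hΩ0, hφΩ] with x h1 h2 hx
      rw [h1 hx, h2 hx, add_zero]
    · filter_upwards [hA0, hφ0] with x h1 h2 hx
      rw [h1 hx, h2 hx, add_zero]
  have hvm : (fun x => w₀ x + -φ x) ∈ KA := by
    rw [hKA]
    have hnφ2 : MemLp (fun x => -φ x) 2 (volume : Measure (Rn n)) := hφ2.neg
    refine ⟨⟨hL2.add hnφ2, ?_, ?_⟩, ?_⟩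
    · exact gag_add_lt_top n s hL2.1 hnφ2.1 hGag ((gag_neg n s φ).symm ▸ hφg)
    · filter_upwards [hΩ0, hφΩ] with x h1 h2 hx
      rw [h1 hx, h2 hx]; norm_num
    · filter_upwards [hA0, hφ0] with x h1 h2 hx
      rw [h1 hx, h2 hx]; norm_num
  have hp := hVI _ hvp
  have hm := hVI _ hvm
  have e1 : (fun x => w₀ x + φ x - w₀ x) = φ := by funext x; ring
  have e2 : (fun x => w₀ x + -φ x - w₀ x) = fun x => -φ x := by funext x; ring
  rw [e1] at hp
  rw [e2] at hm
  have eneg : energy n s w₀ (fun x => -φ x) = - energy n s w₀ φ := by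
    unfold energy
    rw [show (fun p : Rn n × Rn n =>
        (w₀ p.1 - w₀ p.2) * ((fun x => -φ x) p.1 - (fun x => -φ x) p.2)
          / ‖p.1 - p.2‖ ^ ((n : ℝ) + 2 * s)) =
        fun p : Rn n × Rn n =>
          -((w₀ p.1 - w₀ p.2) * (φ p.1 - φ p.2) / ‖p.1 - p.2‖ ^ ((n : ℝ) + 2 * s)) from
        funext fun p => by simp only; ring]
    rw [integral_neg]
    ring
  rw [eneg, integral_neg] at hm
  linarith
end
end

section
/- Let u ∈ L²(ℝⁿ) with [u]_s < ∞, let ε > 0, and set A^ε := {x ∈ ℝⁿ : u(x) > ε}. Then [(u−ε)⁺]_s ≤ [u]_s, and for every nonnegative v ∈ 𝒟_s(A^ε) one has 𝓔_s((u−ε)⁺, v) ≤ 𝓔_s(u, v), where (u−ε)⁺ := max{u−ε, 0}. In other words, (−Δ)^s (u−ε)⁺ ≤ (−Δ)^s u weakly in A^ε. -/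
open MeasureTheory ENNReal Filter Topology

noncomputable section

/-- Monotonicity of the Gagliardo seminorm under pointwise Lipschitz-type domination. -/
lemma gag_mono (n : ℕ) (s : ℝ) {u w : Rn n → ℝ}
    (h : ∀ x y, |w x - w y| ≤ |u x - u y|) : gagSq n s w ≤ gagSq n s u := by
  refine lintegral_mono fun p => ENNReal.ofReal_le_ofReal ?_
  rw [div_eq_mul_inv, div_eq_mul_inv]
  refine mul_le_mul_of_nonneg_right ?_
    (inv_nonneg.2 (Real.rpow_nonneg (norm_nonneg _) _))
  rw [← sq_abs (w p.1 - w p.2), ← sq_abs (u p.1 - u p.2)]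
  exact pow_le_pow_left₀ (abs_nonneg _) (h p.1 p.2) 2

/-- Integrability of the energy integrand, from finiteness of the two Gagliardo seminorms. -/
lemma integrable_energy (n : ℕ) (s : ℝ) (hq : 0 ≤ (n : ℝ) + 2 * s) {a b : Rn n → ℝ}
    (ha : AEStronglyMeasurable a (volume : Measure (Rn n)))
    (hb : AEStronglyMeasurable b (volume : Measure (Rn n)))
    (hga : gagSq n s a < ⊤) (hgb : gagSq n s b < ⊤) :
    Integrable
      (fun p : Rn n × Rn n =>
        (a p.1 - a p.2) * (b p.1 - b p.2) / ‖p.1 - p.2‖ ^ ((n : ℝ) + 2 * s))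
      (volume : Measure (Rn n × Rn n)) := by
  have hfst : Measure.QuasiMeasurePreserving (Prod.fst : Rn n × Rn n → Rn n)
      (volume : Measure (Rn n × Rn n)) (volume : Measure (Rn n)) := by
    rw [Measure.volume_eq_prod]; exact Measure.quasiMeasurePreserving_fst
  have hsnd : Measure.QuasiMeasurePreserving (Prod.snd : Rn n × Rn n → Rn n)
      (volume : Measure (Rn n × Rn n)) (volume : Measure (Rn n)) := by
    rw [Measure.volume_eq_prod]; exact Measure.quasiMeasurePreserving_snd
  have hda : AEStronglyMeasurable (fun p : Rn n × Rn n => a p.1 - a p.2)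
      (volume : Measure (Rn n × Rn n)) :=
    (ha.comp_quasiMeasurePreserving hfst).sub (ha.comp_quasiMeasurePreserving hsnd)
  have hdb : AEStronglyMeasurable (fun p : Rn n × Rn n => b p.1 - b p.2)
      (volume : Measure (Rn n × Rn n)) :=
    (hb.comp_quasiMeasurePreserving hfst).sub (hb.comp_quasiMeasurePreserving hsnd)
  have hK : Continuous (fun p : Rn n × Rn n => ‖p.1 - p.2‖ ^ ((n : ℝ) + 2 * s)) :=
    (Real.continuous_rpow_const hq).comp (continuous_norm.comp (continuous_fst.sub continuous_snd))
  constructor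
  · exact ((hda.aemeasurable.mul hdb.aemeasurable).div hK.measurable.aemeasurable).aestronglyMeasurable
  · refine lt_of_le_of_lt ?_ (ENNReal.add_lt_top.2 ⟨hga, hgb⟩)
    have hbound : ∀ p : Rn n × Rn n,
        (‖(a p.1 - a p.2) * (b p.1 - b p.2) / ‖p.1 - p.2‖ ^ ((n : ℝ) + 2 * s)‖₊ : ℝ≥0∞)
          ≤ ENNReal.ofReal ((a p.1 - a p.2) ^ 2 / ‖p.1 - p.2‖ ^ ((n : ℝ) + 2 * s))
            + ENNReal.ofReal ((b p.1 - b p.2) ^ 2 / ‖p.1 - p.2‖ ^ ((n : ℝ) + 2 * s)) := by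
      intro p
      set A := a p.1 - a p.2
      set B := b p.1 - b p.2
      set K := ‖p.1 - p.2‖ ^ ((n : ℝ) + 2 * s) with hKdef
      have hK0 : 0 ≤ K := Real.rpow_nonneg (norm_nonneg _) _
      have h1 : (‖A * B / K‖₊ : ℝ≥0∞) = ENNReal.ofReal (|A * B| / K) := by
        rw [← enorm_eq_nnnorm, ← ofReal_norm_eq_enorm]
        congr 1
        rw [Real.norm_eq_abs, abs_div, abs_of_nonneg hK0]
      rw [h1]
      refine le_trans (ENNReal.ofReal_le_ofReal ?_) (ENNReal.ofReal_add_le)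
      have habs : |A * B| ≤ A ^ 2 + B ^ 2 := by
        rw [abs_mul]
        nlinarith [abs_nonneg A, abs_nonneg B, sq_abs A, sq_abs B,
          sq_nonneg (|A| - |B|)]
      calc |A * B| / K ≤ (A ^ 2 + B ^ 2) / K := by
            rw [div_eq_mul_inv, div_eq_mul_inv]
            exact mul_le_mul_of_nonneg_right habs (inv_nonneg.2 hK0)
        _ = A ^ 2 / K + B ^ 2 / K := add_div _ _ _
    calc ∫⁻ p : Rn n × Rn n,
          (‖(a p.1 - a p.2) * (b p.1 - b p.2) / ‖p.1 - p.2‖ ^ ((n : ℝ) + 2 * s)‖₊ : ℝ≥0∞)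
        ≤ ∫⁻ p : Rn n × Rn n,
            (ENNReal.ofReal ((a p.1 - a p.2) ^ 2 / ‖p.1 - p.2‖ ^ ((n : ℝ) + 2 * s))
              + ENNReal.ofReal ((b p.1 - b p.2) ^ 2 / ‖p.1 - p.2‖ ^ ((n : ℝ) + 2 * s))) :=
          lintegral_mono hbound
      _ = gagSq n s a + gagSq n s b := by
          rw [gagSq, gagSq]
          exact lintegral_add_left'
            (ENNReal.measurable_ofReal.comp_aemeasurable
              ((hda.aemeasurable.pow_const 2).div hK.measurable.aemeasurable)) _

theorem stmt7 (n : ℕ) (hn : 1 ≤ n) (s : ℝ) (hs : s ∈ Set.Ioo (0:ℝ) 1)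
    (u : Rn n → ℝ) (hu : MemLp u 2 (volume : Measure (Rn n))) (hgu : gagSq n s u < ⊤)
    (ε : ℝ) (hε : 0 < ε)
    (Aε : Set (Rn n)) (hAε : Aε = {x : Rn n | ε < u x}) :
    gagSq n s (fun x => max (u x - ε) 0) ≤ gagSq n s u ∧
      ∀ v : Rn n → ℝ, Ds n s Aε v → (∀ᵐ x : Rn n, 0 ≤ v x) →
        energy n s (fun x => max (u x - ε) 0) v ≤ energy n s u v := by
  subst hAε
  have hq : 0 ≤ (n : ℝ) + 2 * s := by
    have : (1 : ℝ) ≤ (n : ℝ) := by exact_mod_cast hn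
    nlinarith [hs.1]
  set w : Rn n → ℝ := fun x => max (u x - ε) 0 with hwdef
  set g : Rn n → ℝ := fun x => min (u x) ε with hgdef
  have hug : ∀ x, u x - w x = g x := by
    intro x
    rcases le_total (u x) ε with h | h
    · simp only [hwdef, hgdef, max_eq_right (by linarith : u x - ε ≤ 0), min_eq_left h]
      ring
    · simp only [hwdef, hgdef, max_eq_left (by linarith : (0:ℝ) ≤ u x - ε), min_eq_right h]
      ring
  have hW : ∀ x y, |w x - w y| ≤ |u x - u y| := by
    intro x y
    have := abs_max_sub_max_le_abs (u x - ε) (u y - ε) 0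
    simpa using this
  have hG : ∀ x y, |g x - g y| ≤ |u x - u y| := by
    intro x y
    refine (abs_min_sub_min_le_max (u x) ε (u y) ε).trans ?_
    simp
  have hgagw : gagSq n s w ≤ gagSq n s u := gag_mono n s hW
  have hgagg : gagSq n s g ≤ gagSq n s u := gag_mono n s hG
  refine ⟨hgagw, ?_⟩
  rintro v ⟨hvL2, hgv, hvA⟩ hv0
  have hau : AEStronglyMeasurable u (volume : Measure (Rn n)) := hu.aestronglyMeasurable
  have hav : AEStronglyMeasurable v (volume : Measure (Rn n)) := hvL2.aestronglyMeasurable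
  have haw : AEStronglyMeasurable w (volume : Measure (Rn n)) :=
    ((continuous_id.sub continuous_const).max continuous_const).comp_aestronglyMeasurable hau
  -- integrability of the two energy integrands
  have int_fu := integrable_energy n s hq hau hav hgu hgv
  have int_fw := integrable_energy n s hq haw hav (lt_of_le_of_lt hgagw hgu) hgv
  -- a.e. pointwise comparison
  have hfst : Measure.QuasiMeasurePreserving (Prod.fst : Rn n × Rn n → Rn n)
      (volume : Measure (Rn n × Rn n)) (volume : Measure (Rn n)) := by
    rw [Measure.volume_eq_prod]; exact Measure.quasiMeasurePreserving_fst
  have hsnd : Measure.QuasiMeasurePreserving (Prod.snd : Rn n × Rn n → Rn n)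
      (volume : Measure (Rn n × Rn n)) (volume : Measure (Rn n)) := by
    rw [Measure.volume_eq_prod]; exact Measure.quasiMeasurePreserving_snd
  have h1 := hfst.ae (hv0.and hvA)
  have h2 := hsnd.ae (hv0.and hvA)
  have hle : (fun p : Rn n × Rn n =>
        (w p.1 - w p.2) * (v p.1 - v p.2) / ‖p.1 - p.2‖ ^ ((n : ℝ) + 2 * s))
      ≤ᵐ[(volume : Measure (Rn n × Rn n))]
      (fun p : Rn n × Rn n =>
        (u p.1 - u p.2) * (v p.1 - v p.2) / ‖p.1 - p.2‖ ^ ((n : ℝ) + 2 * s)) := by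
    filter_upwards [h1, h2] with p hp1 hp2
    obtain ⟨hv1, hz1⟩ := hp1
    obtain ⟨hv2, hz2⟩ := hp2
    set K := ‖p.1 - p.2‖ ^ ((n : ℝ) + 2 * s) with hKdef
    have hK0 : 0 ≤ K := Real.rpow_nonneg (norm_nonneg _) _
    -- key sign fact
    have hgle1 : g p.1 ≤ ε := min_le_right _ _
    have hgle2 : g p.2 ≤ ε := min_le_right _ _
    have key : 0 ≤ (g p.1 - g p.2) * (v p.1 - v p.2) := by
      by_cases hx : v p.1 = 0 <;> by_cases hy : v p.2 = 0
      · simp [hx, hy]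
      · have h2mem : p.2 ∈ {x : Rn n | ε < u x} := by
          by_contra hc; exact hy (hz2 hc)
        have : g p.2 = ε := min_eq_right (le_of_lt h2mem)
        rw [hx, this]
        nlinarith
      · have h1mem : p.1 ∈ {x : Rn n | ε < u x} := by
          by_contra hc; exact hx (hz1 hc)
        have : g p.1 = ε := min_eq_right (le_of_lt h1mem)
        rw [hy, this]
        nlinarith
      · have h1mem : p.1 ∈ {x : Rn n | ε < u x} := by
          by_contra hc; exact hx (hz1 hc)
        have h2mem : p.2 ∈ {x : Rn n | ε < u x} := by
          by_contra hc; exact hy (hz2 hc)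
        have e1 : g p.1 = ε := min_eq_right (le_of_lt h1mem)
        have e2 : g p.2 = ε := min_eq_right (le_of_lt h2mem)
        rw [e1, e2]
        simp
    have hgd : g p.1 - g p.2 = (u p.1 - u p.2) - (w p.1 - w p.2) := by
      have e1 := hug p.1
      have e2 := hug p.2
      linarith
    have hdiff : (u p.1 - u p.2) * (v p.1 - v p.2) / K
        - (w p.1 - w p.2) * (v p.1 - v p.2) / K
        = (g p.1 - g p.2) * (v p.1 - v p.2) / K := by
      rw [div_sub_div_same]
      congr 1
      rw [hgd]; ring
    have := div_nonneg key hK0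
    linarith [hdiff]
  have hmono := integral_mono_ae int_fw int_fu hle
  unfold energy
  exact mul_le_mul_of_nonneg_left hmono (div_nonneg (cns_nonneg n s) (by norm_num))
end
end
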